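/- For all j ≥ 1, B_1^{j+1} ⊆ B_2^j · {0}. -/

import Mathlib

/-- The languages `B_1^j` of Construction 4.4 (over the one-letter alphabet). -/
def B1 : ℕ → Language (Fin 1)
  | 0 => 0
  | 1 => {[], [0]}
  | 2 => {[0, 0]}
  | (n + 3) => if (n + 3) % 2 = 0 then B1 (n + 1) * {[0, 0, 0]} else B1 (n + 2) * {[0], [0, 0]}

/-- The languages `B_2^j` of Construction 4.4 (over the one-letter alphabet). -/
def B2 : ℕ → Language (Fin 1)
  | 0 => 0
  | 1 => {[], [0]}
  | 2 => {[0], [0, 0], [0, 0, 0]}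
  | (n + 3) => if (n + 3) % 2 = 0 then B2 (n + 2) * {[0, 0]} else B2 (n + 2) * {[0]}

lemma oneL (w : List (Fin 1)) : w = List.replicate w.length 0 := by
  induction w with
  | nil => rfl
  | cons a t ih => simp [List.replicate_succ, Subsingleton.elim a 0]; exact ih

lemma appc (a b : List (Fin 1)) : a ++ b = b ++ a := by
  rw [oneL a, oneL b, ← List.replicate_add, ← List.replicate_add, Nat.add_comm]

lemma lcomm (A B : Language (Fin 1)) : A * B = B * A := by
  ext w
  simp only [Language.mem_mul]
  constructor
  · rintro ⟨x, hx, y, hy, rfl⟩; exact ⟨y, hy, x, hx, (appc x y).symm⟩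
  · rintro ⟨x, hx, y, hy, rfl⟩; exact ⟨y, hy, x, hx, (appc x y).symm⟩

lemma smul (a b : List (Fin 1)) : ({a} : Language (Fin 1)) * {b} = {a ++ b} := by
  ext w; simp only [Language.mem_mul, Set.mem_singleton_iff]
  constructor
  · rintro ⟨x, rfl, y, rfl, rfl⟩; rfl
  · rintro rfl; exact ⟨a, rfl, b, rfl, rfl⟩

/-- Lemma A.7: for all `j ≥ 1`, `B_1^{j+1} ⊆ B_2^j · {0}`. -/
theorem stmt18 : ∀ j : ℕ, 1 ≤ j → B1 (j + 1) ≤ B2 j * {[0]} := by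
  intro j
  induction j using Nat.strong_induction_on with
  | _ j ih =>
  match j with
  | 0 => intro h; exact absurd h (by omega)
  | 1 =>
    intro _ w hw
    simp only [B1, Set.mem_singleton_iff] at hw
    subst hw
    exact ⟨[0], Set.mem_insert_of_mem _ rfl, [0], rfl, rfl⟩
  | 2 =>
    intro _ w hw
    have h3 : B1 3 = {[0,0]} * ({[0], [0,0]} : Language (Fin 1)) := by
      show B1 (0 + 3) = _
      rw [B1]; norm_num
      rw [B1]
    rw [h3] at hw
    replace hw := Language.mem_mul.mp hw
    obtain ⟨x, hx, y, hy, rfl⟩ := hw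
    have hx' : x = [0,0] := hx
    subst hx'
    refine Language.mem_mul.mpr ?_
    rcases hy with rfl | hy
    · exact ⟨[0,0], by right; left; rfl, [0], rfl, rfl⟩
    · have : y = [0,0] := hy
      subst this
      exact ⟨[0,0,0], by right; right; rfl, [0], rfl, rfl⟩
  | (n + 3) =>
    intro _
    have hIH := ih (n + 1) (by omega) (by omega)
    rcases Nat.even_or_odd n with hn | hn
    · -- n even : n+3 odd, n+4 even
      obtain ⟨k, rfl⟩ := hn
      have hB1 : B1 (k + k + 4) = B1 (k + k + 2) * {[0,0,0]} := by
        show B1 ((k + k + 1) + 3) = _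
        rw [B1]; simp [show (k + k + 1 + 3) % 2 = 0 by omega]
      have hB2 : B2 (k + k + 3) = B2 (k + k + 2) * {[0]} := by
        show B2 ((k + k) + 3) = _
        rw [B2]; simp [show (k + k + 3) % 2 = 1 by omega]
      have hB2' : B2 (k + k + 1) * ({[0,0]} : Language (Fin 1)) ≤ B2 (k + k + 2) := by
        match k with
        | 0 =>
          intro w hw
          replace hw := Language.mem_mul.mp hw
          obtain ⟨x, hx, y, hy, rfl⟩ := hw
          have hy' : y = [0,0] := hy
          subst hy'
          rcases hx with rfl | hx
          · right; left; rfl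
          · have : x = [0] := hx
            subst this
            right; right; rfl
        | (m + 1) =>
          have heq : B2 ((m + m + 1) + 3) = B2 ((m + m + 1) + 2) * {[0,0]} := by
            rw [B2]; simp [show (m + m + 1 + 3) % 2 = 0 by omega]
          rw [show m + 1 + (m + 1) + 2 = (m + m + 1) + 3 by omega,
            show m + 1 + (m + 1) + 1 = (m + m + 1) + 2 by omega, heq]
      have e1 : ({[0]} : Language (Fin 1)) * {[0,0,0]} = {[0,0]} * ({[0]} * {[0]}) := by
        rw [smul, smul, smul]; simp
      calc B1 (k + k + 3 + 1) = B1 (k + k + 2) * {[0,0,0]} := hB1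
        _ ≤ B2 (k + k + 1) * {[0]} * {[0,0,0]} := mul_le_mul_left hIH _
        _ = B2 (k + k + 1) * {[0,0]} * ({[0]} * {[0]}) := by
            rw [mul_assoc, mul_assoc, e1]
        _ ≤ B2 (k + k + 2) * ({[0]} * {[0]}) := mul_le_mul_left hB2' _
        _ = B2 (k + k + 3) * {[0]} := by rw [hB2, mul_assoc]
    · -- n odd : n+3 even, n+4 odd
      obtain ⟨m, rfl⟩ := hn
      have hB1a : B1 (2*m + 5) = B1 (2*m + 4) * ({[0], [0,0]} : Language (Fin 1)) := by
        show B1 ((2*m + 2) + 3) = _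
        rw [B1]; simp [show (2*m + 2 + 3) % 2 = 1 by omega]
      have hB1b : B1 (2*m + 4) = B1 (2*m + 2) * {[0,0,0]} := by
        show B1 ((2*m + 1) + 3) = _
        rw [B1]; simp [show (2*m + 1 + 3) % 2 = 0 by omega]
      have hB1c : B1 (2*m + 3) = B1 (2*m + 2) * ({[0], [0,0]} : Language (Fin 1)) := by
        show B1 ((2*m) + 3) = _
        rw [B1]; simp [show (2*m + 3) % 2 = 1 by omega]
      have hB2a : B2 (2*m + 4) = B2 (2*m + 3) * {[0,0]} := by
        show B2 ((2*m + 1) + 3) = _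
        rw [B2]; simp [show (2*m + 1 + 3) % 2 = 0 by omega]
      have hB2b : B2 (2*m + 3) = B2 (2*m + 2) * {[0]} := by
        show B2 ((2*m) + 3) = _
        rw [B2]; simp [show (2*m + 3) % 2 = 1 by omega]
      have e2 : ({[0]} : Language (Fin 1)) * {[0,0,0]} = {[0,0]} * {[0,0]} := by
        rw [smul, smul]; simp
      calc B1 (2*m + 1 + 3 + 1) = B1 (2*m + 2) * ({[0,0,0]} * {[0], [0,0]}) := by
            rw [show 2*m + 1 + 3 + 1 = 2*m + 5 from by omega, hB1a, hB1b, mul_assoc]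
        _ = B1 (2*m + 2) * ({[0], [0,0]} * {[0,0,0]}) := by
            rw [lcomm ({[0,0,0]} : Language (Fin 1))]
        _ = B1 (2*m + 3) * {[0,0,0]} := by rw [hB1c, mul_assoc]
        _ ≤ B2 (2*m + 2) * {[0]} * {[0,0,0]} := by
            apply mul_le_mul_left
            rw [show 2*m + 2 = 2*m + 1 + 1 from by omega]
            exact hIH
        _ = B2 (2*m + 1 + 3) * {[0]} := by
            rw [show 2*m + 1 + 3 = 2*m + 4 from by omega, hB2a, hB2b,
              mul_assoc, mul_assoc, mul_assoc, e2, smul, smul, smul]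
            simp
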